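/- For the exponential fading model, P(z1 ≥ z2) = 1/(1+γ) and E[(z1 − z2)·1{z1 ≥ z2}] = 1/(1+γ); consequently P(z1 ≥ z2)·log_e 2 / E[(z1 − z2)·1{z1 ≥ z2}] = log_e 2 (i.e., the minimum energy per bit of the first user's confidential message equals log_e 2, independent of γ). -/

import Mathlib

open MeasureTheory ProbabilityTheory Filter Set

open Real

-- inner integral for expectation, y ≥ 0
lemma innerB (y : ℝ) (hy : 0 ≤ y) :
    ∫⁻ x, exponentialPDF 1 x * ENNReal.ofReal (if y ≤ x then x - y else 0)
      = ENNReal.ofReal (Real.exp (-y)) := by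
  have hshift := lintegral_add_right_eq_self (μ := volume)
    (fun x => exponentialPDF 1 x * ENNReal.ofReal (if y ≤ x then x - y else 0)) y
  rw [← hshift]
  have hpt : (fun x => exponentialPDF 1 (x + y) *
      ENNReal.ofReal (if y ≤ x + y then x + y - y else 0))
      = fun x => ENNReal.ofReal (Real.exp (-y)) * gammaPDF 2 1 x := by
    funext x
    rcases le_or_gt 0 x with hx | hx
    · rw [exponentialPDF_of_nonneg (by linarith), if_pos (by linarith)]
      rw [gammaPDF, gammaPDFReal, if_pos hx]
      rw [← ENNReal.ofReal_mul (Real.exp_nonneg _), ← ENNReal.ofReal_mul (by positivity)]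
      congr 1
      rw [Real.Gamma_two]
      have : ((1:ℝ)) ^ (2:ℝ) = 1 := Real.one_rpow 2
      rw [this]
      have h21 : (2:ℝ) - 1 = 1 := by norm_num
      rw [h21, Real.rpow_one]
      rw [show -(1 * (x + y)) = -x + -y by ring, Real.exp_add]
      ring_nf
    · rw [if_neg (by linarith), gammaPDF, gammaPDFReal, if_neg (not_le.mpr hx)]
      simp
  simp only [hpt]
  have hm : Measurable (gammaPDF 2 1) := (measurable_gammaPDFReal 2 1).ennreal_ofReal
  rw [lintegral_const_mul _ hm, lintegral_gammaPDF_eq_one (by norm_num) one_pos, mul_one]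

-- inner integral for probability, y ≥ 0
lemma innerA (y : ℝ) (hy : 0 ≤ y) :
    ∫⁻ x, exponentialPDF 1 x * (if y ≤ x then 1 else 0)
      = ENNReal.ofReal (Real.exp (-y)) := by
  have hshift := lintegral_add_right_eq_self (μ := volume)
    (fun x => exponentialPDF 1 x * (if y ≤ x then 1 else 0)) y
  rw [← hshift]
  have hpt : (fun x => exponentialPDF 1 (x + y) * (if y ≤ x + y then (1:ENNReal) else 0))
      = fun x => ENNReal.ofReal (Real.exp (-y)) * exponentialPDF 1 x := by
    funext x
    rcases le_or_gt 0 x with hx | hx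
    · rw [exponentialPDF_of_nonneg (by linarith), exponentialPDF_of_nonneg hx,
        if_pos (by linarith), mul_one]
      rw [← ENNReal.ofReal_mul (Real.exp_nonneg _)]
      congr 1
      rw [show -(1 * (x + y)) = -y + -(1*x) by ring, Real.exp_add]; ring
    · rw [if_neg (by linarith), exponentialPDF_of_neg hx, mul_zero, mul_zero]
  simp only [hpt]
  have hm : Measurable (exponentialPDF 1) := (measurable_exponentialPDFReal 1).ennreal_ofReal
  rw [lintegral_const_mul _ hm, lintegral_exponentialPDF_eq_one one_pos, mul_one]

-- outer integral
lemma outerInt (r : ℝ) (hr : 0 < r) :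
    ∫⁻ y, exponentialPDF r y * ENNReal.ofReal (Real.exp (-y))
      = ENNReal.ofReal (r / (1 + r)) := by
  have hpt : (fun y => exponentialPDF r y * ENNReal.ofReal (Real.exp (-y)))
      = fun y => ENNReal.ofReal (r / (1 + r)) * exponentialPDF (1 + r) y := by
    funext y
    rcases le_or_gt 0 y with hy | hy
    · rw [exponentialPDF_of_nonneg hy, exponentialPDF_of_nonneg hy,
        ← ENNReal.ofReal_mul (by positivity), ← ENNReal.ofReal_mul (by positivity)]
      congr 1
      have he : rexp (-((1+r) * y)) = rexp (-(r*y)) * rexp (-y) := by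
        rw [← Real.exp_add]; ring_nf
      rw [he]; field_simp
    · rw [exponentialPDF_of_neg hy, exponentialPDF_of_neg hy, zero_mul, mul_zero]
  simp only [hpt]
  have hm : Measurable (exponentialPDF (1+r)) := (measurable_exponentialPDFReal (1+r)).ennreal_ofReal
  rw [lintegral_const_mul _ hm, lintegral_exponentialPDF_eq_one (by linarith), mul_one]


/-- For independent exponential fading powers (`z1` with mean 1, `z2`
with mean `γ`), `P(z1 ≥ z2) = 1/(1+γ)` and `E[(z1 − z2)·1{z1 ≥ z2}] = 1/(1+γ)`;
consequently `P(z1 ≥ z2)·log 2 / E[(z1 − z2)·1{z1 ≥ z2}] = log 2`, i.e. the minimum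
energy per bit of the first user's confidential message equals `log 2`, independent
of `γ`. -/
theorem exponential_fading_min_energy_per_bit_user1
    {Ω : Type*} [MeasurableSpace Ω] (μ : Measure Ω) [IsProbabilityMeasure μ]
    (z1 z2 : Ω → ℝ) (hz1m : Measurable z1) (hz2m : Measurable z2)
    (hindep : IndepFun z1 z2 μ)
    (γ : ℝ) (hγ : 0 < γ)
    (hz1law : μ.map z1 = expMeasure 1)
    (hz2law : μ.map z2 = expMeasure γ⁻¹) :
    (μ {ω | z2 ω ≤ z1 ω}).toReal = 1 / (1 + γ) ∧
    (∫ ω, (if z2 ω ≤ z1 ω then z1 ω - z2 ω else 0) ∂μ) = 1 / (1 + γ) ∧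
    (μ {ω | z2 ω ≤ z1 ω}).toReal * Real.log 2 /
      (∫ ω, (if z2 ω ≤ z1 ω then z1 ω - z2 ω else 0) ∂μ) = Real.log 2 := by

  set r := γ⁻¹ with hrdef
  have hr : 0 < r := inv_pos.mpr hγ
  haveI hp1 : IsProbabilityMeasure (expMeasure 1) := isProbabilityMeasure_expMeasure one_pos
  haveI hp2 : IsProbabilityMeasure (expMeasure r) := isProbabilityMeasure_expMeasure hr
  have hpair : Measurable fun ω => (z1 ω, z2 ω) := hz1m.prodMk hz2m
  have hmap : μ.map (fun ω => (z1 ω, z2 ω)) = (expMeasure 1).prod (expMeasure r) := by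
    rw [(indepFun_iff_map_prod_eq_prod_map_map hz1m.aemeasurable hz2m.aemeasurable).mp hindep,
      hz1law, hz2law]
  have hSm : MeasurableSet {p : ℝ × ℝ | p.2 ≤ p.1} :=
    measurableSet_le measurable_snd measurable_fst
  have hwd : ∀ s : ℝ, expMeasure s = volume.withDensity (exponentialPDF s) := fun s => rfl
  have hpdfm : ∀ s : ℝ, Measurable (exponentialPDF s) :=
    fun s => (measurable_exponentialPDFReal s).ennreal_ofReal
  have hfrac_pos : (0:ℝ) < 1 / (1 + γ) := by positivity
  have hrval : r / (1 + r) = 1 / (1 + γ) := by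
    rw [hrdef, div_eq_div_iff (by positivity) (by positivity)]
    field_simp
    ring
  -- a.e. nonnegativity under expMeasure r
  have hzero : expMeasure r {y : ℝ | ¬ (0:ℝ) ≤ y} = 0 := by
    have hset : {y : ℝ | ¬ (0:ℝ) ≤ y} = Iio 0 := by ext y; simp [not_le]
    rw [hset, hwd r, withDensity_apply _ measurableSet_Iio,
      lintegral_exponentialPDF_of_nonpos le_rfl]
  have hae : ∀ᵐ y ∂(expMeasure r), (0:ℝ) ≤ y := ae_iff.mpr hzero
  -- Probability computation
  have hP : μ {ω | z2 ω ≤ z1 ω} = ENNReal.ofReal (1 / (1 + γ)) := by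
    have hpre : {ω | z2 ω ≤ z1 ω}
        = (fun ω => (z1 ω, z2 ω)) ⁻¹' {p : ℝ × ℝ | p.2 ≤ p.1} := rfl
    rw [hpre, ← Measure.map_apply hpair hSm, hmap, ← lintegral_indicator_one hSm]
    have hind : {p : ℝ × ℝ | p.2 ≤ p.1}.indicator (1 : ℝ × ℝ → ENNReal)
        = fun p => if p.2 ≤ p.1 then 1 else 0 := by
      funext p; by_cases h : p.2 ≤ p.1 <;> simp [Set.indicator_apply, h]
    rw [hind]
    have hFm : Measurable fun p : ℝ × ℝ => if p.2 ≤ p.1 then (1:ENNReal) else 0 :=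
      Measurable.ite hSm measurable_const measurable_const
    rw [lintegral_prod_symm _ hFm.aemeasurable]
    have hcongr : (∫⁻ y, ∫⁻ x, (if (x, y).2 ≤ (x, y).1 then (1:ENNReal) else 0)
          ∂(expMeasure 1) ∂(expMeasure r))
        = ∫⁻ y, ENNReal.ofReal (Real.exp (-y)) ∂(expMeasure r) := by
      refine lintegral_congr_ae (hae.mono fun y hy => ?_)
      dsimp only
      have hgym : Measurable (fun x : ℝ => if y ≤ x then (1:ENNReal) else 0) :=
        Measurable.ite (measurableSet_le measurable_const measurable_id)
          measurable_const measurable_const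
      rw [hwd 1, lintegral_withDensity_eq_lintegral_mul _ (hpdfm 1) hgym]
      simp only [Pi.mul_apply]
      exact innerA y hy
    have hexpm : Measurable (fun y : ℝ => ENNReal.ofReal (Real.exp (-y))) :=
      (Real.continuous_exp.comp continuous_neg).measurable.ennreal_ofReal
    rw [hcongr, hwd r, lintegral_withDensity_eq_lintegral_mul _ (hpdfm r) hexpm]
    simp only [Pi.mul_apply]
    rw [outerInt r hr, hrval]
  -- Expectation computation
  have hE : (∫ ω, (if z2 ω ≤ z1 ω then z1 ω - z2 ω else 0) ∂μ) = 1 / (1 + γ) := by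
    set g : ℝ × ℝ → ℝ := fun p => if p.2 ≤ p.1 then p.1 - p.2 else 0 with hgdef
    have hgm : Measurable g :=
      Measurable.ite hSm (measurable_fst.sub measurable_snd) measurable_const
    have h1 : (∫ ω, (if z2 ω ≤ z1 ω then z1 ω - z2 ω else 0) ∂μ)
        = ∫ p, g p ∂((expMeasure 1).prod (expMeasure r)) := by
      rw [← hmap, integral_map hpair.aemeasurable hgm.aestronglyMeasurable]
    rw [h1, integral_eq_lintegral_of_nonneg_ae
      (ae_of_all _ fun p => by by_cases h : p.2 ≤ p.1 <;> simp [hgdef, h])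
      hgm.aestronglyMeasurable]
    have hL : (∫⁻ p, ENNReal.ofReal (g p) ∂((expMeasure 1).prod (expMeasure r)))
        = ENNReal.ofReal (1 / (1 + γ)) := by
      rw [lintegral_prod_symm _ hgm.ennreal_ofReal.aemeasurable]
      have hcongr : (∫⁻ y, ∫⁻ x, ENNReal.ofReal (g (x, y))
            ∂(expMeasure 1) ∂(expMeasure r))
          = ∫⁻ y, ENNReal.ofReal (Real.exp (-y)) ∂(expMeasure r) := by
        refine lintegral_congr_ae (hae.mono fun y hy => ?_)
        dsimp only [hgdef]
        have hgym : Measurable (fun x : ℝ =>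
            ENNReal.ofReal (if y ≤ x then x - y else 0)) :=
          (Measurable.ite (measurableSet_le measurable_const measurable_id)
            (measurable_id.sub measurable_const) measurable_const).ennreal_ofReal
        rw [hwd 1, lintegral_withDensity_eq_lintegral_mul _ (hpdfm 1) hgym]
        simp only [Pi.mul_apply]
        exact innerB y hy
      have hexpm : Measurable (fun y : ℝ => ENNReal.ofReal (Real.exp (-y))) :=
        (Real.continuous_exp.comp continuous_neg).measurable.ennreal_ofReal
      rw [hcongr, hwd r, lintegral_withDensity_eq_lintegral_mul _ (hpdfm r) hexpm]
      simp only [Pi.mul_apply]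
      rw [outerInt r hr, hrval]
    rw [hL, ENNReal.toReal_ofReal hfrac_pos.le]
  refine ⟨by rw [hP, ENNReal.toReal_ofReal hfrac_pos.le], hE, ?_⟩
  rw [hP, ENNReal.toReal_ofReal hfrac_pos.le, hE, mul_comm, mul_div_assoc,
    div_self (ne_of_gt hfrac_pos), mul_one]
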